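/- If p is a random variable uniformly distributed on [0,1], Z is an independent real random variable whose distribution is symmetric about 0, and Φ is the standard normal CDF, then p̃ = Φ(Φ⁻¹(p) + Z) has a distribution symmetric about 1/2: ℙ(p̃ ≤ t) = ℙ(p̃ ≥ 1 - t) for all t ∈ [0,1]. -/

import Mathlib

open MeasureTheory ProbabilityTheory Set Real

/-- The standard normal CDF `Φ`. -/
noncomputable def stdNormalCDF (x : ℝ) : ℝ :=
  ∫ t in Iic x, (Real.sqrt (2 * π))⁻¹ * Real.exp (-t ^ 2 / 2)

/-- The standard normal quantile function `Φ⁻¹`. -/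
noncomputable def stdNormalQuantile : ℝ → ℝ := Function.invFun stdNormalCDF

noncomputable def stdG (t : ℝ) : ℝ := (Real.sqrt (2 * π))⁻¹ * Real.exp (-t ^ 2 / 2)

lemma stdG_pos (t : ℝ) : 0 < stdG t := by
  have h2π : (0:ℝ) < 2 * π := by positivity
  exact mul_pos (inv_pos.2 (Real.sqrt_pos.2 h2π)) (Real.exp_pos _)

lemma stdG_cont : Continuous stdG := by
  unfold stdG; fun_prop

lemma stdG_integrable : Integrable stdG := by
  have h : stdG = fun t => (Real.sqrt (2 * π))⁻¹ * Real.exp (-(2⁻¹) * t ^ 2) := by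
    funext t; unfold stdG; ring_nf
  rw [h]
  exact (integrable_exp_neg_mul_sq (by norm_num : (0:ℝ) < 2⁻¹)).const_mul _

lemma stdG_integral : ∫ t, stdG t = 1 := by
  have h : ∀ t : ℝ, stdG t = (Real.sqrt (2 * π))⁻¹ * Real.exp (-(2⁻¹) * t ^ 2) := by
    intro t; unfold stdG; ring_nf
  simp_rw [h]
  rw [integral_const_mul, integral_gaussian]
  have : π / 2⁻¹ = 2 * π := by ring
  rw [this]
  have h2π : (0:ℝ) < 2 * π := by positivity
  rw [inv_mul_cancel₀ (ne_of_gt (Real.sqrt_pos.2 h2π))]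

lemma stdNormalCDF_def (x : ℝ) : stdNormalCDF x = ∫ t in Iic x, stdG t := rfl

lemma setIntegral_stdG_pos {s : Set ℝ} (hs : MeasurableSet s) (h : 0 < volume s) :
    0 < ∫ t in s, stdG t := by
  rw [setIntegral_pos_iff_support_of_nonneg_ae
    (Filter.Eventually.of_forall fun t => (stdG_pos t).le) stdG_integrable.integrableOn]
  have hsupp : Function.support stdG = univ := eq_univ_of_forall fun t => (stdG_pos t).ne'
  rwa [hsupp, univ_inter]

lemma stdNormalCDF_add_Ioi (x : ℝ) : stdNormalCDF x + ∫ t in Ioi x, stdG t = 1 := by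
  rw [stdNormalCDF_def, ← stdG_integral]
  rw [← setIntegral_union (Iic_disjoint_Ioi le_rfl) measurableSet_Ioi
    stdG_integrable.integrableOn stdG_integrable.integrableOn, Iic_union_Ioi,
    setIntegral_univ]

lemma stdNormalCDF_lt_one (x : ℝ) : stdNormalCDF x < 1 := by
  have := stdNormalCDF_add_Ioi x
  have hpos : 0 < ∫ t in Ioi x, stdG t :=
    setIntegral_stdG_pos measurableSet_Ioi (by simp [Real.volume_Ioi])
  linarith

lemma stdNormalCDF_pos (x : ℝ) : 0 < stdNormalCDF x := by
  rw [stdNormalCDF_def]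
  exact setIntegral_stdG_pos measurableSet_Iic (by simp [Real.volume_Iic])

lemma stdNormalCDF_strictMono : StrictMono stdNormalCDF := by
  intro a b hab
  rw [stdNormalCDF_def, stdNormalCDF_def, ← Iic_union_Ioc_eq_Iic hab.le,
    setIntegral_union (Iic_disjoint_Ioc le_rfl) measurableSet_Ioc
      stdG_integrable.integrableOn stdG_integrable.integrableOn]
  have : 0 < ∫ t in Ioc a b, stdG t :=
    setIntegral_stdG_pos measurableSet_Ioc (by simp [Real.volume_Ioc, hab])
  linarith

lemma stdNormalCDF_neg (x : ℝ) : stdNormalCDF (-x) = 1 - stdNormalCDF x := by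
  have heven : ∀ t : ℝ, stdG (-t) = stdG t := by
    intro t; unfold stdG; rw [neg_pow, pow_succ, pow_succ]; ring_nf
  have h1 : stdNormalCDF (-x) = ∫ t in Iic (-x), stdG (-t) := by
    rw [stdNormalCDF_def]; exact (setIntegral_congr_fun measurableSet_Iic
      (fun t _ => (heven t).symm))
  rw [h1, integral_comp_neg_Iic, neg_neg]
  have := stdNormalCDF_add_Ioi x
  linarith

lemma stdNormalCDF_continuous : Continuous stdNormalCDF := by
  have h : stdNormalCDF = fun x => stdNormalCDF 0 + ∫ t in (0:ℝ)..x, stdG t := by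
    funext x
    rw [← intervalIntegral.integral_Iic_sub_Iic stdG_integrable.integrableOn
      stdG_integrable.integrableOn, stdNormalCDF_def, stdNormalCDF_def]
    ring
  rw [h]
  exact continuous_const.add (stdG_integrable.continuous_primitive 0)

lemma stdNormalCDF_tendsto : Filter.Tendsto (fun n : ℕ => stdNormalCDF n)
    Filter.atTop (nhds 1) := by
  have hU : ⋃ n : ℕ, Iic ((n : ℝ)) = univ := by
    refine eq_univ_of_forall fun x => ?_
    obtain ⟨n, hn⟩ := exists_nat_ge x
    exact mem_iUnion.2 ⟨n, hn⟩
  have h := tendsto_setIntegral_of_monotone (μ := volume) (f := stdG)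
    (s := fun n : ℕ => Iic ((n : ℝ))) (fun _ => measurableSet_Iic)
    (fun m n hmn => Iic_subset_Iic.2 (by exact_mod_cast hmn))
    (by rw [hU]; exact stdG_integrable.integrableOn)
  rw [hU, setIntegral_univ, stdG_integral] at h
  exact h

lemma stdNormalCDF_surjOn : ∀ y ∈ Ioo (0:ℝ) 1, ∃ x, stdNormalCDF x = y := by
  intro y hy
  have hmax : max y (1 - y) < 1 := by
    rcases hy with ⟨h0, h1⟩
    exact max_lt h1 (by linarith)
  obtain ⟨n, hn⟩ := (stdNormalCDF_tendsto.eventually (lt_mem_nhds hmax)).exists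
  have h1 : y < stdNormalCDF n := lt_of_le_of_lt (le_max_left _ _) hn
  have h2 : stdNormalCDF (-(n:ℝ)) < y := by
    rw [stdNormalCDF_neg]
    have := lt_of_le_of_lt (le_max_right y (1 - y)) hn
    linarith
  exact intermediate_value_univ (-(n:ℝ)) n stdNormalCDF_continuous ⟨h2.le, h1.le⟩

lemma stdNormalCDF_quantile {y : ℝ} (hy : y ∈ Ioo (0:ℝ) 1) :
    stdNormalCDF (stdNormalQuantile y) = y :=
  Function.invFun_eq (stdNormalCDF_surjOn y hy)

lemma stdNormalQuantile_one_sub {t : ℝ} (ht : t ∈ Ioo (0:ℝ) 1) :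
    stdNormalQuantile (1 - t) = -stdNormalQuantile t := by
  apply stdNormalCDF_strictMono.injective
  rw [stdNormalCDF_quantile (by constructor <;> [linarith [ht.2]; linarith [ht.1]]),
    stdNormalCDF_neg, stdNormalCDF_quantile ht]

/-- If `p` is uniform on `[0,1]` and `Z` an independent random variable with distribution
symmetric about `0`, then `p̃ = Φ(Φ⁻¹(p) + Z)` has a distribution symmetric about `1/2`:
`ℙ(p̃ ≤ t) = ℙ(p̃ ≥ 1 - t)` for all `t ∈ [0,1]`. -/
theorem noisy_uniform_p_value_symmetric
    {Ω : Type*} [MeasurableSpace Ω] (P : Measure Ω) [IsProbabilityMeasure P]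
    (p Z : Ω → ℝ) (hp_meas : Measurable p) (hZ_meas : Measurable Z)
    (hp_law : Measure.map p P = volume.restrict (Icc (0 : ℝ) 1))
    (hZ_symm : Measure.map Z P = Measure.map (fun ω => -Z ω) P)
    (hindep : IndepFun p Z P)
    (ptilde : Ω → ℝ)
    (hptilde : ∀ ω, ptilde ω = stdNormalCDF (stdNormalQuantile (p ω) + Z ω)) :
    ∀ t ∈ Icc (0 : ℝ) 1,
      P {ω | ptilde ω ≤ t} = P {ω | 1 - t ≤ ptilde ω} := by
  intro t ht
  have hmem : ∀ x, stdNormalCDF x ∈ Ioo (0:ℝ) 1 :=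
    fun x => ⟨stdNormalCDF_pos x, stdNormalCDF_lt_one x⟩
  have hpt : ∀ ω, ptilde ω ∈ Ioo (0:ℝ) 1 := fun ω => (hptilde ω) ▸ hmem _
  rcases eq_or_lt_of_le ht.1 with h0 | h0
  · -- t = 0
    have e1 : {ω | ptilde ω ≤ t} = (∅ : Set Ω) :=
      eq_empty_iff_forall_notMem.2 fun ω hω => absurd hω (by
        simp only [mem_setOf_eq, not_le, ← h0]; exact (hpt ω).1)
    have e2 : {ω | 1 - t ≤ ptilde ω} = (∅ : Set Ω) :=
      eq_empty_iff_forall_notMem.2 fun ω hω => absurd hω (by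
        simp only [mem_setOf_eq, not_le, ← h0, sub_zero]; exact (hpt ω).2)
    rw [e1, e2]
  rcases eq_or_lt_of_le ht.2 with h1 | h1
  · -- t = 1
    have e1 : {ω | ptilde ω ≤ t} = (univ : Set Ω) :=
      eq_univ_of_forall fun ω => by
        simp only [mem_setOf_eq, h1]; exact (hpt ω).2.le
    have e2 : {ω | 1 - t ≤ ptilde ω} = (univ : Set Ω) :=
      eq_univ_of_forall fun ω => by
        simp only [mem_setOf_eq, h1, sub_self]; exact (hpt ω).1.le
    rw [e1, e2]
  -- main case : t ∈ Ioo 0 1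
  have htIoo : t ∈ Ioo (0:ℝ) 1 := ⟨h0, h1⟩
  set c := stdNormalQuantile t with hc
  have hFc : stdNormalCDF c = t := stdNormalCDF_quantile htIoo
  have hae : ∀ᵐ ω ∂P, p ω ∈ Ioo (0:ℝ) 1 := by
    rw [ae_iff]
    have hpre : {ω | ¬ p ω ∈ Ioo (0:ℝ) 1} = p ⁻¹' (Ioo (0:ℝ) 1)ᶜ := rfl
    rw [hpre, ← Measure.map_apply hp_meas measurableSet_Ioo.compl, hp_law,
      Measure.restrict_apply measurableSet_Ioo.compl]
    have h2 : (Ioo (0:ℝ) 1)ᶜ ∩ Icc 0 1 = Icc (0:ℝ) 1 \ Ioo 0 1 := by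
      rw [inter_comm]; rfl
    rw [h2, Icc_diff_Ioo_same zero_le_one]
    exact Set.Finite.measure_zero (by simp) volume
  have hQle : ∀ {x y : ℝ}, stdNormalCDF x ≤ stdNormalCDF y ↔ x ≤ y :=
    fun {x y} => stdNormalCDF_strictMono.le_iff_le
  have hs1 : P {ω | ptilde ω ≤ t} = P {ω | p ω ≤ stdNormalCDF (c - Z ω)} := by
    apply measure_congr
    rw [Filter.eventuallyEq_set]
    filter_upwards [hae] with ω hω
    simp only [mem_setOf_eq, hptilde ω]
    have hq : stdNormalCDF (stdNormalQuantile (p ω)) = p ω := stdNormalCDF_quantile hω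
    constructor
    · intro h
      rw [← hFc] at h
      have h' := hQle.mp h
      rw [← hq]; exact hQle.mpr (by linarith)
    · intro h
      rw [← hq] at h
      have h' := hQle.mp h
      rw [← hFc]; exact hQle.mpr (by linarith)
  have hs2 : P {ω | 1 - t ≤ ptilde ω} = P {ω | stdNormalCDF (-c - Z ω) ≤ p ω} := by
    apply measure_congr
    rw [Filter.eventuallyEq_set]
    filter_upwards [hae] with ω hω
    simp only [mem_setOf_eq, hptilde ω]
    have hq : stdNormalCDF (stdNormalQuantile (p ω)) = p ω := stdNormalCDF_quantile hω
    have h1t : stdNormalCDF (-c) = 1 - t := by rw [stdNormalCDF_neg, hFc]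
    constructor
    · intro h
      rw [← h1t] at h
      have h' := hQle.mp h
      rw [← hq] at h ⊢
      exact hQle.mpr (by linarith)
    · intro h
      rw [← hq] at h
      have h' := hQle.mp h
      rw [← h1t]
      exact hQle.mpr (by linarith)
  haveI hν : IsProbabilityMeasure (Measure.map Z P) :=
    Measure.isProbabilityMeasure_map hZ_meas.aemeasurable
  have hjoint : Measure.map (fun ω => (Z ω, p ω)) P
      = (Measure.map Z P).prod (volume.restrict (Icc (0:ℝ) 1)) := by
    rw [← hp_law]
    exact (indepFun_iff_map_prod_eq_prod_map_map hZ_meas.aemeasurable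
      hp_meas.aemeasurable).mp hindep.symm
  have key : ∀ φ : ℝ → ℝ, Continuous φ → (∀ z, φ z ∈ Icc (0:ℝ) 1) →
      P {ω | p ω ≤ φ (Z ω)} = ∫⁻ z, ENNReal.ofReal (φ z) ∂(Measure.map Z P) := by
    intro φ hφc hφm
    have hS : MeasurableSet {zu : ℝ × ℝ | zu.2 ≤ φ zu.1} :=
      measurableSet_le measurable_snd (hφc.comp continuous_fst).measurable
    have hpre : {ω | p ω ≤ φ (Z ω)}
        = (fun ω => (Z ω, p ω)) ⁻¹' {zu : ℝ × ℝ | zu.2 ≤ φ zu.1} := rfl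
    rw [hpre, ← Measure.map_apply (hZ_meas.prodMk hp_meas) hS, hjoint,
      Measure.prod_apply hS]
    refine lintegral_congr fun z => ?_
    have hsl : Prod.mk z ⁻¹' {zu : ℝ × ℝ | zu.2 ≤ φ zu.1} = Iic (φ z) := rfl
    rw [hsl, Measure.restrict_apply measurableSet_Iic]
    have hint : Iic (φ z) ∩ Icc (0:ℝ) 1 = Icc 0 (φ z) := by
      ext u; simp only [mem_inter_iff, mem_Iic, mem_Icc]
      exact ⟨fun h => ⟨h.2.1, h.1⟩, fun h => ⟨h.2, h.1, h.2.trans (hφm z).2⟩⟩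
    rw [hint, Real.volume_Icc, sub_zero]
  have key' : ∀ φ : ℝ → ℝ, Continuous φ → (∀ z, φ z ∈ Icc (0:ℝ) 1) →
      P {ω | φ (Z ω) ≤ p ω} = ∫⁻ z, ENNReal.ofReal (1 - φ z) ∂(Measure.map Z P) := by
    intro φ hφc hφm
    have hS : MeasurableSet {zu : ℝ × ℝ | φ zu.1 ≤ zu.2} :=
      measurableSet_le (hφc.comp continuous_fst).measurable measurable_snd
    have hpre : {ω | φ (Z ω) ≤ p ω}
        = (fun ω => (Z ω, p ω)) ⁻¹' {zu : ℝ × ℝ | φ zu.1 ≤ zu.2} := rfl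
    rw [hpre, ← Measure.map_apply (hZ_meas.prodMk hp_meas) hS, hjoint,
      Measure.prod_apply hS]
    refine lintegral_congr fun z => ?_
    have hsl : Prod.mk z ⁻¹' {zu : ℝ × ℝ | φ zu.1 ≤ zu.2} = Ici (φ z) := rfl
    rw [hsl, Measure.restrict_apply measurableSet_Ici]
    have hint : Ici (φ z) ∩ Icc (0:ℝ) 1 = Icc (φ z) 1 := by
      ext u; simp only [mem_inter_iff, mem_Ici, mem_Icc]
      exact ⟨fun h => ⟨h.1, h.2.2⟩, fun h => ⟨h.1, (hφm z).1.trans h.1, h.2⟩⟩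
    rw [hint, Real.volume_Icc]
  have hsym : ∫⁻ z, ENNReal.ofReal (stdNormalCDF (c - z)) ∂(Measure.map Z P)
      = ∫⁻ z, ENNReal.ofReal (stdNormalCDF (c + z)) ∂(Measure.map Z P) := by
    have hm1 : Measurable fun z : ℝ => ENNReal.ofReal (stdNormalCDF (c - z)) :=
      ENNReal.measurable_ofReal.comp
        (stdNormalCDF_continuous.comp (continuous_const.sub continuous_id)).measurable
    have hm2 : Measurable fun z : ℝ => ENNReal.ofReal (stdNormalCDF (c + z)) :=
      ENNReal.measurable_ofReal.comp
        (stdNormalCDF_continuous.comp (continuous_const.add continuous_id)).measurable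
    calc ∫⁻ z, ENNReal.ofReal (stdNormalCDF (c - z)) ∂(Measure.map Z P)
        = ∫⁻ z, ENNReal.ofReal (stdNormalCDF (c - z)) ∂(Measure.map (fun ω => -Z ω) P) := by
          rw [← hZ_symm]
      _ = ∫⁻ ω, ENNReal.ofReal (stdNormalCDF (c - (-Z ω))) ∂P := lintegral_map hm1 hZ_meas.neg
      _ = ∫⁻ ω, ENNReal.ofReal (stdNormalCDF (c + Z ω)) ∂P := by simp [sub_neg_eq_add]
      _ = ∫⁻ z, ENNReal.ofReal (stdNormalCDF (c + z)) ∂(Measure.map Z P) :=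
          (lintegral_map hm2 hZ_meas).symm
  rw [hs1, hs2,
    key (fun z => stdNormalCDF (c - z))
      (stdNormalCDF_continuous.comp (continuous_const.sub continuous_id))
      (fun z => ⟨(hmem _).1.le, (hmem _).2.le⟩),
    key' (fun z => stdNormalCDF (-c - z))
      (stdNormalCDF_continuous.comp (continuous_const.sub continuous_id))
      (fun z => ⟨(hmem _).1.le, (hmem _).2.le⟩),
    hsym]
  refine lintegral_congr fun z => ?_
  congr 1
  have h3 : -c - z = -(c + z) := by ring
  rw [h3, stdNormalCDF_neg]
  ring
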